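/- For p ∈ (0,1) and all x, y ∈ ℝⁿ, the p-angular distance satisfies ||x|^(p-1)·x - |y|^(p-1)·y| ≤ 2^(1-p)·|x-y|^p, with equality when x = -y. -/

import Mathlib

open Real


lemma aux_subadd {p x y : ℝ} (hp : 0 ≤ p) (hp1 : p ≤ 1) (hx : 0 ≤ x) (hy : 0 ≤ y) :
    (x + y) ^ p ≤ x ^ p + y ^ p := by
  have h := NNReal.rpow_add_le_add_rpow x.toNNReal y.toNNReal hp hp1
  have hxy : ((x.toNNReal + y.toNNReal : NNReal) : ℝ) = x + y := by
    push_cast [Real.coe_toNNReal x hx, Real.coe_toNNReal y hy]; ring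
  calc (x + y) ^ p = (((x.toNNReal + y.toNNReal) ^ p : NNReal) : ℝ) := by
        rw [NNReal.coe_rpow, hxy]
    _ ≤ ((x.toNNReal ^ p + y.toNNReal ^ p : NNReal) : ℝ) := by exact_mod_cast h
    _ = x ^ p + y ^ p := by
        push_cast [NNReal.coe_rpow, Real.coe_toNNReal x hx, Real.coe_toNNReal y hy]; ring

lemma aux_sub {p a b : ℝ} (hp : 0 ≤ p) (hp1 : p ≤ 1) (hb : 0 ≤ b) (hba : b ≤ a) :
    a ^ p - b ^ p ≤ (a - b) ^ p := by
  have h := aux_subadd hp hp1 (by linarith : (0:ℝ) ≤ a - b) hb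
  rw [sub_add_cancel] at h
  linarith

lemma aux_pm {p a b : ℝ} (hp0 : 0 < p) (hp1 : p < 1) (ha : 0 ≤ a) (hb : 0 ≤ b) :
    a ^ p + b ^ p ≤ 2 ^ (1 - p) * (a + b) ^ p := by
  have hcon := Real.concaveOn_rpow hp0.le hp1.le
  have h := hcon.2 (Set.mem_Ici.mpr ha) (Set.mem_Ici.mpr hb)
    (by norm_num : (0:ℝ) ≤ 1/2) (by norm_num : (0:ℝ) ≤ 1/2) (by norm_num)
  simp only [smul_eq_mul] at h
  have h2 : (1/2 * a + 1/2 * b) ^ p = 2 ^ (-p) * (a + b) ^ p := by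
    have e : 1/2 * a + 1/2 * b = (2:ℝ)⁻¹ * (a + b) := by ring
    rw [e, Real.mul_rpow (by norm_num) (by linarith), ← Real.rpow_neg_one 2,
      ← Real.rpow_mul (by norm_num), neg_one_mul]
  rw [h2] at h
  have h3 : (2:ℝ) ^ (1 - p) = 2 * 2 ^ (-p) := by
    rw [show (1:ℝ) - p = 1 + (-p) by ring, Real.rpow_add (by norm_num), Real.rpow_one]
  rw [h3]
  linarith

lemma rpow_sq_comm {x : ℝ} (hx : 0 ≤ x) (p : ℝ) : ((x ^ 2 : ℝ)) ^ p = (x ^ p) ^ 2 := by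
  rw [← Real.rpow_natCast x 2, ← Real.rpow_natCast (x ^ p) 2, ← Real.rpow_mul hx,
    ← Real.rpow_mul hx]
  norm_num [mul_comm]

lemma core {p a b c D : ℝ} (hp0 : 0 < p) (hp1 : p < 1) (ha : 0 < a) (hb : 0 < b)
    (hc : |c| ≤ a * b) (hD0 : 0 ≤ D) (hD : D ^ 2 = a ^ 2 + b ^ 2 - 2 * c) :
    (a ^ p) ^ 2 + (b ^ p) ^ 2 - 2 * (a ^ p * b ^ p / (a * b)) * c
      ≤ (2 ^ (1 - p) * D ^ p) ^ 2 := by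
  obtain ⟨hc1, hc2⟩ := abs_le.mp hc
  have hA0 : 0 ≤ a ^ p := Real.rpow_nonneg ha.le p
  have hB0 : 0 ≤ b ^ p := Real.rpow_nonneg hb.le p
  have hab : 0 < a * b := mul_pos ha hb
  set A := a ^ p with hA
  set B := b ^ p with hB
  set θ := (a * b - c) / (2 * (a * b)) with hθ
  have hθ0 : 0 ≤ θ := div_nonneg (by linarith) (by linarith)
  have hθ1 : θ ≤ 1 := by rw [hθ, div_le_one (by linarith)]; linarith
  have h2p : (0:ℝ) < 2 ^ (1 - p) := Real.rpow_pos_of_pos (by norm_num) _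
  have h2p1 : (1:ℝ) ≤ 2 ^ (1 - p) := by
    calc (1:ℝ) = 2 ^ (0:ℝ) := (Real.rpow_zero 2).symm
    _ ≤ 2 ^ (1 - p) := Real.rpow_le_rpow_of_exponent_le one_le_two (by linarith)
  have hid : A ^ 2 + B ^ 2 - 2 * (A * B / (a * b)) * c
      = θ * (A + B) ^ 2 + (1 - θ) * (A - B) ^ 2 := by
    rw [hθ]; field_simp; ring
  have he1 : (A + B) ^ 2 ≤ (2 ^ (1 - p)) ^ 2 * ((a + b) ^ 2 : ℝ) ^ p := by
    rw [rpow_sq_comm (by linarith) p, ← mul_pow]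
    exact pow_le_pow_left₀ (by positivity) (aux_pm hp0 hp1 ha.le hb.le) 2
  have he2 : (A - B) ^ 2 ≤ (2 ^ (1 - p)) ^ 2 * ((a - b) ^ 2 : ℝ) ^ p := by
    have habs : |A - B| ≤ |a - b| ^ p := by
      rcases le_total b a with h | h
      · have := aux_sub hp0.le hp1.le hb.le h
        rw [abs_of_nonneg (by linarith : (0:ℝ) ≤ a - b)]
        rw [abs_le]
        constructor
        · have : (0:ℝ) ≤ (a - b) ^ p := Real.rpow_nonneg (by linarith) p
          have hBA : B ≤ A := Real.rpow_le_rpow hb.le h hp0.le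
          linarith
        · linarith
      · have hsub := aux_sub hp0.le hp1.le ha.le h
        have hAB : A ≤ B := Real.rpow_le_rpow ha.le h hp0.le
        have hee : |a - b| = b - a := by rw [abs_of_nonpos (by linarith)]; ring
        rw [hee, abs_le]
        refine ⟨by linarith, ?_⟩
        have := Real.rpow_nonneg (show (0:ℝ) ≤ b - a by linarith) p
        linarith
    have hsqe : ((a - b) ^ 2 : ℝ) ^ p = (|a - b| ^ p) ^ 2 := by
      rw [← sq_abs (a - b)]; exact rpow_sq_comm (abs_nonneg _) p
    calc (A - B) ^ 2 = |A - B| ^ 2 := (sq_abs _).symm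
      _ ≤ (|a - b| ^ p) ^ 2 := by
          apply pow_le_pow_left₀ (abs_nonneg _) habs
      _ ≤ (2 ^ (1 - p)) ^ 2 * (|a - b| ^ p) ^ 2 :=
          le_mul_of_one_le_left (sq_nonneg _) (by nlinarith [h2p1])
      _ = (2 ^ (1 - p)) ^ 2 * ((a - b) ^ 2 : ℝ) ^ p := by rw [hsqe]
  have hconc := (Real.concaveOn_rpow hp0.le hp1.le).2
    (Set.mem_Ici.mpr (sq_nonneg (a + b))) (Set.mem_Ici.mpr (sq_nonneg (a - b)))
    hθ0 (by linarith : (0:ℝ) ≤ 1 - θ) (by ring)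
  simp only [smul_eq_mul] at hconc
  have hmix : θ * (a + b) ^ 2 + (1 - θ) * (a - b) ^ 2 = D ^ 2 := by
    rw [hD, hθ]; field_simp; ring
  rw [hmix] at hconc
  have hD2 : ((D ^ 2 : ℝ)) ^ p = (D ^ p) ^ 2 := rpow_sq_comm hD0 p
  calc A ^ 2 + B ^ 2 - 2 * (A * B / (a * b)) * c
      = θ * (A + B) ^ 2 + (1 - θ) * (A - B) ^ 2 := hid
    _ ≤ θ * ((2 ^ (1 - p)) ^ 2 * ((a + b) ^ 2 : ℝ) ^ p)
        + (1 - θ) * ((2 ^ (1 - p)) ^ 2 * ((a - b) ^ 2 : ℝ) ^ p) := by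
          apply add_le_add
          · exact mul_le_mul_of_nonneg_left he1 hθ0
          · exact mul_le_mul_of_nonneg_left he2 (by linarith)
    _ = (2 ^ (1 - p)) ^ 2 * (θ * ((a + b) ^ 2 : ℝ) ^ p + (1 - θ) * ((a - b) ^ 2 : ℝ) ^ p) := by
          ring
    _ ≤ (2 ^ (1 - p)) ^ 2 * ((D ^ 2 : ℝ)) ^ p := by
          apply mul_le_mul_of_nonneg_left hconc (by positivity)
    _ = (2 ^ (1 - p) * D ^ p) ^ 2 := by rw [hD2]; ring

theorem stmt_11 (n : ℕ) (p : ℝ) (hp : p ∈ Set.Ioo (0:ℝ) 1)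
    (x y : EuclideanSpace ℝ (Fin n)) :
    ‖(‖x‖ ^ (p - 1)) • x - (‖y‖ ^ (p - 1)) • y‖ ≤ 2 ^ (1 - p) * ‖x - y‖ ^ p ∧
    (x = -y → ‖(‖x‖ ^ (p - 1)) • x - (‖y‖ ^ (p - 1)) • y‖ = 2 ^ (1 - p) * ‖x - y‖ ^ p) := by
  obtain ⟨hp0, hp1⟩ := hp
  have h2p1 : (1:ℝ) ≤ 2 ^ (1 - p) := by
    calc (1:ℝ) = 2 ^ (0:ℝ) := (Real.rpow_zero 2).symm
    _ ≤ 2 ^ (1 - p) := Real.rpow_le_rpow_of_exponent_le one_le_two (by linarith)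
  constructor
  · -- inequality
    have hne : p - 1 ≠ 0 := by intro h; rw [sub_eq_zero] at h; linarith
    by_cases hx : x = 0
    · subst hx
      by_cases hy : y = 0
      · subst hy
        simp [Real.zero_rpow (ne_of_gt hp0), Real.zero_rpow hne]
      · simp only [norm_zero, Real.zero_rpow hne, zero_smul, zero_sub, norm_neg]
        have hb : 0 < ‖y‖ := norm_pos_iff.mpr hy
        rw [norm_smul, Real.norm_eq_abs,
          abs_of_nonneg (Real.rpow_nonneg hb.le _)]
        have : ‖y‖ ^ (p - 1) * ‖y‖ = ‖y‖ ^ p := by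
          rw [Real.rpow_sub hb, Real.rpow_one]; field_simp
        rw [this]
        calc ‖y‖ ^ p = 1 * ‖y‖ ^ p := (one_mul _).symm
          _ ≤ 2 ^ (1 - p) * ‖y‖ ^ p := by
              apply mul_le_mul_of_nonneg_right h2p1 (Real.rpow_nonneg hb.le p)
    · by_cases hy : y = 0
      · subst hy
        simp only [norm_zero, Real.zero_rpow hne, zero_smul, sub_zero]
        have ha : 0 < ‖x‖ := norm_pos_iff.mpr hx
        rw [norm_smul, Real.norm_eq_abs, abs_of_nonneg (Real.rpow_nonneg ha.le _)]
        have : ‖x‖ ^ (p - 1) * ‖x‖ = ‖x‖ ^ p := by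
          rw [Real.rpow_sub ha, Real.rpow_one]; field_simp
        rw [this]
        calc ‖x‖ ^ p = 1 * ‖x‖ ^ p := (one_mul _).symm
          _ ≤ 2 ^ (1 - p) * ‖x‖ ^ p := by
              apply mul_le_mul_of_nonneg_right h2p1 (Real.rpow_nonneg ha.le p)
      · have ha : 0 < ‖x‖ := norm_pos_iff.mpr hx
        have hb : 0 < ‖y‖ := norm_pos_iff.mpr hy
        set c : ℝ := inner ℝ x y with hcdef
        have hc : |c| ≤ ‖x‖ * ‖y‖ := abs_real_inner_le_norm x y
        have hD : ‖x - y‖ ^ 2 = ‖x‖ ^ 2 + ‖y‖ ^ 2 - 2 * c := by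
          rw [norm_sub_sq_real]; ring
        have hkey := core hp0 hp1 ha hb hc (norm_nonneg (x - y)) hD
        have hexp : ‖(‖x‖ ^ (p - 1)) • x - (‖y‖ ^ (p - 1)) • y‖ ^ 2
            = (‖x‖ ^ p) ^ 2 + (‖y‖ ^ p) ^ 2 - 2 * (‖x‖ ^ p * ‖y‖ ^ p / (‖x‖ * ‖y‖)) * c := by
          rw [norm_sub_sq_real, real_inner_smul_left, real_inner_smul_right,
            norm_smul, norm_smul, Real.norm_eq_abs, Real.norm_eq_abs,
            abs_of_nonneg (Real.rpow_nonneg ha.le _), abs_of_nonneg (Real.rpow_nonneg hb.le _)]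
          have e1 : ‖x‖ ^ (p - 1) = ‖x‖ ^ p / ‖x‖ := by
            rw [Real.rpow_sub ha, Real.rpow_one]
          have e2 : ‖y‖ ^ (p - 1) = ‖y‖ ^ p / ‖y‖ := by
            rw [Real.rpow_sub hb, Real.rpow_one]
          rw [e1, e2, ← hcdef]
          field_simp
          ring
        have hsq : ‖(‖x‖ ^ (p - 1)) • x - (‖y‖ ^ (p - 1)) • y‖ ^ 2
            ≤ (2 ^ (1 - p) * ‖x - y‖ ^ p) ^ 2 := by rw [hexp]; exact hkey
        have hR : (0:ℝ) ≤ 2 ^ (1 - p) * ‖x - y‖ ^ p := by positivity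
        nlinarith [norm_nonneg ((‖x‖ ^ (p - 1)) • x - (‖y‖ ^ (p - 1)) • y)]
  · -- equality when x = -y
    intro hxy
    subst hxy
    by_cases hy : y = 0
    · subst hy
      simp [Real.zero_rpow (ne_of_gt hp0)]
    · have hb : 0 < ‖y‖ := norm_pos_iff.mpr hy
      rw [norm_neg]
      have e1 : (‖y‖ ^ (p - 1)) • (-y) - (‖y‖ ^ (p - 1)) • y = (-(2 * ‖y‖ ^ (p - 1))) • y := by
        module
      have e2 : -y - y = (-2 : ℝ) • y := by module
      rw [e1, e2, norm_smul, norm_smul, Real.norm_eq_abs, Real.norm_eq_abs]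
      rw [abs_of_nonpos (neg_nonpos.mpr (by positivity)), neg_neg,
        show |(-2:ℝ)| = 2 by norm_num,
        Real.mul_rpow (by norm_num : (0:ℝ) ≤ 2) hb.le]
      have h3 : ‖y‖ ^ (p - 1) * ‖y‖ = ‖y‖ ^ p := by
        rw [Real.rpow_sub hb, Real.rpow_one]; field_simp
      have h4 : (2:ℝ) ^ (1 - p) * 2 ^ p = 2 := by
        rw [← Real.rpow_add (by norm_num : (0:ℝ) < 2)]; norm_num
      rw [mul_assoc, h3, ← mul_assoc, h4]
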